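/- Under the hypotheses of the previous identity, the dual surface satisfies Demoulin's equation (1/κ₁ - 1/κ₂)(1/κ₁* - 1/κ₂*) = 1/(κ₁²H₁²) + ε/(κ₂²H₂²) if and only if lκ₁ - hκ₂ = 0, i.e. if and only if 1/κ̂₁ = 1/κ̂₂. -/
import Mathlib


/-- the dual surface of a G-surface satisfies Demoulin's equation
iff lκ₁ - hκ₂ = 0, i.e. iff 1/κ̂₁ = 1/κ̂₂. -/
theorem stmt_7 (H₁ H₂ κ₁ κ₂ h l ε : ℝ)
    (hH₁ : 0 < H₁) (hH₂ : 0 < H₂)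
    (hκ₁ : κ₁ ≠ 0) (hκ₂ : κ₂ ≠ 0) (hh : h ≠ 0) (hl : l ≠ 0)
    (hd1 : 1 - h ^ 2 * H₁ ^ 2 ≠ 0) (hd2 : ε - l ^ 2 * H₂ ^ 2 ≠ 0)
    (hG : (h - l) ^ 2 = (H₂ ^ 2 + ε * H₁ ^ 2) / (H₁ ^ 2 * H₂ ^ 2))
    (k1hat k2hat k1s k2s : ℝ)
    (h1 : k1hat = κ₁ / h) (h2 : k2hat = κ₂ / l)
    (h3 : k1s = H₁ ^ 2 * κ₁ / (1 - h ^ 2 * H₁ ^ 2))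
    (h4 : k2s = H₂ ^ 2 * κ₂ / (ε - l ^ 2 * H₂ ^ 2))
    (hk1s : k1s ≠ 0) (hk2s : k2s ≠ 0) :
    ((1 / κ₁ - 1 / κ₂) * (1 / k1s - 1 / k2s)
        = 1 / (κ₁ ^ 2 * H₁ ^ 2) + ε / (κ₂ ^ 2 * H₂ ^ 2)
      ↔ l * κ₁ - h * κ₂ = 0)
    ∧ (l * κ₁ - h * κ₂ = 0 ↔ 1 / k1hat = 1 / k2hat) := by
  have hH1 : H₁ ≠ 0 := ne_of_gt hH₁
  have hH2 : H₂ ≠ 0 := ne_of_gt hH₂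
  have hεv : ε = ((h - l) ^ 2 * (H₁ ^ 2 * H₂ ^ 2) - H₂ ^ 2) / H₁ ^ 2 := by
    field_simp at hG ⊢
    nlinarith [hG]
  subst h1 h2 h3 h4 hεv
  constructor
  · have main : (1 / κ₁ - 1 / κ₂) *
        (1 / (H₁ ^ 2 * κ₁ / (1 - h ^ 2 * H₁ ^ 2)) -
          1 / (H₂ ^ 2 * κ₂ / ((((h - l) ^ 2 * (H₁ ^ 2 * H₂ ^ 2) - H₂ ^ 2) / H₁ ^ 2) - l ^ 2 * H₂ ^ 2))) -
        (1 / (κ₁ ^ 2 * H₁ ^ 2) + (((h - l) ^ 2 * (H₁ ^ 2 * H₂ ^ 2) - H₂ ^ 2) / H₁ ^ 2) / (κ₂ ^ 2 * H₂ ^ 2))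
        = -(l * κ₁ - h * κ₂) ^ 2 / (κ₁ ^ 2 * κ₂ ^ 2) := by
      rw [one_div_div, one_div_div]
      field_simp
      ring
    constructor
    · intro heq
      have hz : -(l * κ₁ - h * κ₂) ^ 2 / (κ₁ ^ 2 * κ₂ ^ 2) = 0 := by
        rw [← main, heq]; ring
      have hden : (κ₁ ^ 2 * κ₂ ^ 2 : ℝ) ≠ 0 := by positivity
      field_simp at hz
      have hsq : (l * κ₁ - h * κ₂) ^ 2 = 0 := by nlinarith [hz, sq_nonneg (l * κ₁ - h * κ₂)]
      exact pow_eq_zero_iff (n := 2) (by norm_num) |>.mp hsq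
    · intro h0
      have : -(l * κ₁ - h * κ₂) ^ 2 / (κ₁ ^ 2 * κ₂ ^ 2) = 0 := by rw [h0]; simp
      linarith [main, this]
  · rw [one_div_div, one_div_div]
    constructor
    · intro h0
      field_simp
      linarith
    · intro he
      field_simp at he
      linarith
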